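/- Let p ≥ 5 be a prime and G = SL₂(ℤ/pℤ). Let μ : G → ℝ be nonnegative and symmetric, i.e. μ(g⁻¹) = μ(g) for all g ∈ G, and let T : ℓ²(G) → ℓ²(G) be the convolution operator Tφ = μ ∗ φ. Then every eigenvalue λ of the restriction of T to the space of mean-zero functions on G satisfies |λ| ≤ √(2/(p−1)) · ‖μ‖₂ · |G|^{1/2}, where ‖μ‖₂ = (Σ_{g∈G} μ(g)²)^{1/2}. -/

import Mathlib

open Finset

/-- Convolution of a real weight with a complex-valued function on a finite group:
`(μ ∗ φ)(x) = Σ_g μ(g) φ(g⁻¹ x)`. -/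
noncomputable def convR {G : Type*} [Group G] [Fintype G] (μ : G → ℝ) (φ : G → ℂ) : G → ℂ :=
  fun x => ∑ g : G, (μ g : ℂ) * φ (g⁻¹ * x)

open Matrix

variable {p : ℕ} [Fact p.Prime]
abbrev GG (p : ℕ) := Matrix.SpecialLinearGroup (Fin 2) (ZMod p)
def Uu (a : ZMod p) : GG p := ⟨!![1, a; 0, 1], by simp [Matrix.det_fin_two_of]⟩
def Ee (a : ZMod p) : GG p := ⟨!![1, 0; a, 1], by simp [Matrix.det_fin_two_of]⟩
def Dd (t : (ZMod p)ˣ) : GG p := ⟨!![(t : ZMod p), 0; 0, ((t⁻¹ : (ZMod p)ˣ) : ZMod p)], by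
  rw [Matrix.det_fin_two_of, Units.mul_inv]; ring⟩
def Cc : GG p := ⟨!![0, 1; -1, 0], by simp [Matrix.det_fin_two_of]⟩
lemma Uu_mul (a b : ZMod p) : Uu a * Uu b = Uu (a + b) := by
  apply Subtype.ext
  simp only [Matrix.SpecialLinearGroup.coe_mul]
  simp [Uu, Matrix.mul_fin_two, add_comm]
lemma Uu_zero : (Uu 0 : GG p) = 1 := by
  apply Subtype.ext; simp [Uu]; exact (Matrix.eta_fin_two 1).symm.trans (by norm_num)
lemma Uu_Dd (i : ZMod p) (t : (ZMod p)ˣ) :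
    Uu i * Dd t = Dd t * Uu (i * ((t⁻¹ : (ZMod p)ˣ) : ZMod p) ^ 2) := by
  apply Subtype.ext
  simp only [Matrix.SpecialLinearGroup.coe_mul]
  simp only [Uu, Dd, Matrix.mul_fin_two]
  have h : (t : ZMod p) * ((t⁻¹ : (ZMod p)ˣ) : ZMod p) = 1 := Units.mul_inv t
  have h2 : (t : ZMod p) * (i * ((t⁻¹ : (ZMod p)ˣ) : ZMod p) ^ 2)
      = i * ((t⁻¹ : (ZMod p)ˣ) : ZMod p) := by linear_combination (i * ((t⁻¹ : (ZMod p)ˣ) : ZMod p)) * h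
  rw [h2]
  ring_nf
lemma Cc_mul_Uu (a : ZMod p) : (Cc : GG p) * Uu (-a) = Ee a * Cc := by
  apply Subtype.ext
  simp only [Matrix.SpecialLinearGroup.coe_mul]
  simp [Cc, Uu, Ee, Matrix.mul_fin_two]
lemma Ee_eq_conj (a : ZMod p) : Ee a = (Cc : GG p) * Uu (-a) * Cc⁻¹ := by
  rw [Cc_mul_Uu, mul_inv_cancel_right]
lemma gen_decomp (g : GG p) (hc : (g : Matrix (Fin 2) (Fin 2) (ZMod p)) 1 0 ≠ 0) :
    g = Uu ((g.1 0 0 - 1) * (g.1 1 0)⁻¹) * Ee (g.1 1 0)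
        * Uu (g.1 0 1 + (1 - g.1 0 0) * (g.1 1 0)⁻¹ * g.1 1 1) := by
  have hdet : g.1 0 0 * g.1 1 1 - g.1 0 1 * g.1 1 0 = 1 := by
    have := g.2; rwa [Matrix.det_fin_two] at this
  apply Subtype.ext
  set a := g.1 0 0
  set b := g.1 0 1
  set c := g.1 1 0
  set d := g.1 1 1
  have hg : (g : Matrix (Fin 2) (Fin 2) (ZMod p)) = !![a, b; c, d] := Matrix.eta_fin_two _
  rw [hg]
  simp only [Matrix.SpecialLinearGroup.coe_mul]
  simp only [Uu, Ee, Matrix.mul_fin_two]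
  ext i j
  fin_cases i <;> fin_cases j <;> simp <;> field_simp <;>
    first
      | linear_combination hdet
      | linear_combination (g.1 0 0 - 2) * hdet
      | linear_combination g.1 0 0 * hdet
      | linear_combination (g.1 0 0 - 1) * hdet
      | linear_combination (g.1 1 1) * hdet
      | linear_combination (-1 : ZMod p) * hdet
      | ring
lemma generation (H : Subgroup (GG p)) (hU : ∀ a, Uu a ∈ H) (hE : ∀ a, Ee a ∈ H)
    (g : GG p) : g ∈ H := by
  by_cases hc : (g : Matrix (Fin 2) (Fin 2) (ZMod p)) 1 0 = 0
  · have hdet : g.1 0 0 * g.1 1 1 - g.1 0 1 * g.1 1 0 = 1 := by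
      have := g.2; rwa [Matrix.det_fin_two] at this
    have ha : g.1 0 0 ≠ 0 := by
      intro h0
      rw [h0, hc] at hdet
      simp at hdet
    have hge : ((Ee 1 * g : GG p) : Matrix (Fin 2) (Fin 2) (ZMod p)) 1 0 ≠ 0 := by
      have : ((Ee 1 * g : GG p) : Matrix (Fin 2) (Fin 2) (ZMod p)) 1 0
          = g.1 0 0 + g.1 1 0 := by
        simp only [Matrix.SpecialLinearGroup.coe_mul]
        simp [Ee, Matrix.mul_apply, Fin.sum_univ_two]
      rw [this, hc, add_zero]
      exact ha
    have hmem : Ee 1 * g ∈ H := by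
      rw [gen_decomp _ hge]
      exact mul_mem (mul_mem (hU _) (hE _)) (hU _)
    have : (Ee 1)⁻¹ * (Ee 1 * g) ∈ H := mul_mem (inv_mem (hE 1)) hmem
    simpa [inv_mul_cancel_left] using this
  · rw [gen_decomp g hc]
    exact mul_mem (mul_mem (hU _) (hE _)) (hU _)
section Char
variable (p : ℕ) [hpF : Fact p.Prime]

noncomputable def ch (j : ZMod p) : ℂ := Complex.exp (2 * Real.pi * Complex.I / p) ^ j.val

variable {p}

lemma ch_prim : IsPrimitiveRoot (Complex.exp (2 * Real.pi * Complex.I / p)) p :=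
  Complex.isPrimitiveRoot_exp p (hpF.out.ne_zero)

lemma ch_root_pow : Complex.exp (2 * Real.pi * Complex.I / p) ^ p = 1 := ch_prim.pow_eq_one

lemma ch_zero : ch p 0 = 1 := by
  haveI : NeZero p := ⟨hpF.out.ne_zero⟩
  simp [ch, ZMod.val_zero]

lemma ch_add (a b : ZMod p) : ch p (a + b) = ch p a * ch p b := by
  haveI : NeZero p := ⟨hpF.out.ne_zero⟩
  rw [ch, ZMod.val_add, ← pow_eq_pow_mod _ ch_root_pow, pow_add]
  rfl

lemma ch_norm (a : ZMod p) : ‖ch p a‖ = 1 := by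
  rw [ch, norm_pow, Complex.norm_eq_one_of_pow_eq_one ch_root_pow hpF.out.ne_zero, one_pow]

lemma ch_ne_zero (a : ZMod p) : ch p a ≠ 0 := by
  intro h; have := ch_norm a; rw [h] at this; simp at this

lemma ch_neg' (a : ZMod p) : ch p (-a) * ch p a = 1 := by
  rw [← ch_add, neg_add_cancel, ch_zero]

lemma ch_neg (a : ZMod p) : ch p (-a) = (ch p a)⁻¹ :=
  (inv_eq_of_mul_eq_one_left (ch_neg' a)).symm

lemma conj_ch (a : ZMod p) : (starRingEnd ℂ) (ch p a) = ch p (-a) := by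
  rw [← Complex.inv_eq_conj (ch_norm a)]
  exact inv_eq_of_mul_eq_one_left (ch_neg' a)

lemma ch_sum : ∑ j : ZMod p, ch p j = 0 := by
  haveI : NeZero p := ⟨hpF.out.ne_zero⟩
  have h : ∑ j : ZMod p, ch p j = ∑ i ∈ Finset.range p, Complex.exp (2 * Real.pi * Complex.I / p) ^ i := by
    refine Finset.sum_nbij' (fun j => j.val) (fun i => (i : ZMod p)) ?_ ?_ ?_ ?_ ?_ <;>
      simp [ZMod.val_lt, ZMod.natCast_val, ZMod.cast_id, ch] <;>
      (intro a ha; exact Nat.mod_eq_of_lt ha)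
  rw [h]
  exact ch_prim.geom_sum_eq_zero hpF.out.one_lt

lemma ch_sum_mul {k : ZMod p} (hk : k ≠ 0) : ∑ j : ZMod p, ch p (k * j) = 0 := by
  exact (Fintype.sum_equiv (Equiv.mulLeft₀ k hk) (fun j => ch p (k * j)) (ch p)
    (fun j => rfl)).trans ch_sum

lemma ch_sum_ite (k : ZMod p) : ∑ j : ZMod p, ch p (k * j) = if k = 0 then (p : ℂ) else 0 := by
  split_ifs with h
  · subst h; simp [ch_zero, Finset.card_univ]
  · exact ch_sum_mul h
end Char

section Main
variable {p : ℕ} [hpF : Fact p.Prime]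
variable (μ : GG p → ℝ) (lam : ℝ) (φ : GG p → ℂ)

lemma conv_translate (ψ : GG p → ℂ) (a : GG p) :
    convR μ (fun x => ψ (x * a)) = fun x => (convR μ ψ) (x * a) := by
  funext x
  simp only [convR]
  refine Finset.sum_congr rfl fun g _ => ?_
  rw [mul_assoc]

/-- Twisted Fourier coefficient along the unipotent subgroup, right-translated by `a`. -/
noncomputable def Fk (k : ZMod p) (a : GG p) : GG p → ℂ :=
  fun x => ∑ j : ZMod p, ch p (-(k * j)) * φ (x * Uu j * a)

variable {μ lam φ}

lemma Fk_eigen (hφ : convR μ φ = fun x => (lam : ℂ) * φ x) (k : ZMod p) (a : GG p) :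
    convR μ (Fk φ k a) = fun x => (lam : ℂ) * Fk φ k a x := by
  funext x
  simp only [convR, Fk, Finset.mul_sum]
  rw [Finset.sum_comm]
  refine Finset.sum_congr rfl fun j _ => ?_
  have h1 : ∑ g : GG p, (μ g : ℂ) * (ch p (-(k * j)) * φ (g⁻¹ * x * Uu j * a))
      = ch p (-(k * j)) * ∑ g : GG p, (μ g : ℂ) * φ (g⁻¹ * (x * Uu j * a)) := by
    rw [Finset.mul_sum]
    refine Finset.sum_congr rfl fun g _ => ?_
    rw [mul_assoc g⁻¹ x, mul_assoc g⁻¹]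
    ring
  rw [h1]
  have h2 : ∑ g : GG p, (μ g : ℂ) * φ (g⁻¹ * (x * Uu j * a)) = (lam : ℂ) * φ (x * Uu j * a) := by
    have := congrFun hφ (x * Uu j * a)
    simpa [convR] using this
  rw [h2]
  ring

lemma Fk_char (k : ZMod p) (a : GG p) (x : GG p) (i : ZMod p) :
    Fk φ k a (x * Uu i) = ch p (k * i) * Fk φ k a x := by
  simp only [Fk, Finset.mul_sum]
  refine Fintype.sum_equiv (Equiv.addLeft i) _ _ fun j => ?_
  have hU : x * Uu i * Uu j * a = x * Uu (i + j) * a := by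
    rw [mul_assoc x, Uu_mul]
  rw [hU]
  have hch : ch p (-(k * j)) = ch p (k * i) * ch p (-(k * (i + j))) := by
    rw [← ch_add]
    congr 1
    ring
  rw [hch, Equiv.coe_addLeft, mul_assoc]

lemma Fk_inversion (i : ZMod p) (a x : GG p) :
    (p : ℂ) * φ (x * Uu i * a) = ∑ k : ZMod p, ch p (k * i) * Fk φ k a x := by
  have hswap : ∑ k : ZMod p, ch p (k * i) * Fk φ k a x
      = ∑ j : ZMod p, (∑ k : ZMod p, ch p (k * i) * ch p (-(k * j))) * φ (x * Uu j * a) := by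
    simp only [Fk, Finset.mul_sum]
    rw [Finset.sum_comm]
    refine Finset.sum_congr rfl fun j _ => ?_
    rw [Finset.sum_mul]
    refine Finset.sum_congr rfl fun k _ => ?_
    ring
  rw [hswap]
  have hval : ∀ j : ZMod p, (∑ k : ZMod p, ch p (k * i) * ch p (-(k * j)))
      = if (i - j) = 0 then (p : ℂ) else 0 := by
    intro j
    rw [← ch_sum_ite (i - j)]
    refine Finset.sum_congr rfl fun k _ => ?_
    rw [← ch_add]
    congr 1
    ring
  rw [Finset.sum_congr rfl fun j _ => by rw [hval j]]
  rw [Finset.sum_congr rfl (g := fun j => if i = j then (p:ℂ) * φ (x * Uu j * a) else 0)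
    (fun j _ => by simp only [sub_eq_zero]; split_ifs <;> simp)]
  rw [Finset.sum_ite_eq]
  simp

/-- The subgroup of elements whose left translation fixes `φ`. -/
def Hsub (φ : GG p → ℂ) : Subgroup (GG p) where
  carrier := {h | ∀ y, φ (h * y) = φ y}
  one_mem' := by simp
  mul_mem' := by
    intro a b ha hb y
    rw [mul_assoc, ha, hb]
  inv_mem' := by
    intro a ha y
    have := ha (a⁻¹ * y)
    rw [mul_inv_cancel_left] at this
    exact this.symm

lemma exists_nonzero_Fk (hφne : φ ≠ 0)
    (hsum : (∑ x : GG p, φ x) = 0)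
    (hzero : ∀ k : ZMod p, k ≠ 0 → ∀ a : GG p, Fk φ k a = 0) : False := by
  have hpne : (p : ℂ) ≠ 0 := by
    exact_mod_cast hpF.out.ne_zero
  -- φ is invariant under left multiplication by conjugates of Uu i
  have hinv : ∀ (x : GG p) (i : ZMod p) (a : GG p), φ (x * Uu i * a) = φ (x * a) := by
    intro x i a
    have h1 := Fk_inversion (φ := φ) i a x
    have h2 := Fk_inversion (φ := φ) 0 a x
    have he : ∀ k : ZMod p, ch p (k * i) * Fk φ k a x = ch p (k * 0) * Fk φ k a x := by
      intro k
      by_cases hk : k = 0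
      · subst hk; simp
      · rw [hzero k hk]; simp
    rw [Finset.sum_congr rfl fun k _ => he k] at h1
    rw [← h2] at h1
    have : φ (x * Uu i * a) = φ (x * Uu 0 * a) := mul_left_cancel₀ hpne h1
    rwa [Uu_zero, mul_one] at this
  have hconj : ∀ (g : GG p) (i : ZMod p), g * Uu i * g⁻¹ ∈ Hsub φ := by
    intro g i y
    have := hinv g i (g⁻¹ * y)
    simp only [mul_assoc] at this ⊢
    simpa [inv_mul_cancel_left] using this
  have hU : ∀ i : ZMod p, Uu i ∈ Hsub φ := by
    intro i
    have := hconj 1 i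
    simpa using this
  have hE : ∀ i : ZMod p, Ee i ∈ Hsub φ := by
    intro i
    rw [Ee_eq_conj]
    exact hconj Cc (-i)
  have hall : ∀ g : GG p, ∀ y, φ (g * y) = φ y := fun g => generation (Hsub φ) hU hE g
  have hconst : ∀ g : GG p, φ g = φ 1 := by
    intro g
    have := hall g 1
    rwa [mul_one] at this
  have : (Fintype.card (GG p) : ℂ) * φ 1 = 0 := by
    rw [← hsum]
    rw [Finset.sum_congr rfl fun g _ => hconst g]
    simp [Finset.card_univ, mul_comm]
  have hcard : (Fintype.card (GG p) : ℂ) ≠ 0 := by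
    exact_mod_cast Fintype.card_ne_zero
  have hφ1 : φ 1 = 0 := by
    rcases mul_eq_zero.mp this with h | h
    · exact absurd h hcard
    · exact h
  apply hφne
  funext g
  rw [hconst g, hφ1]
  rfl

lemma ortho_of_char {k k' : ZMod p} (hne : k ≠ k') (ψ ψ' : GG p → ℂ)
    (hψ : ∀ x i, ψ (x * Uu i) = ch p (k * i) * ψ x)
    (hψ' : ∀ x i, ψ' (x * Uu i) = ch p (k' * i) * ψ' x) :
    ∑ x : GG p, (starRingEnd ℂ) (ψ x) * ψ' x = 0 := by
  set I := ∑ x : GG p, (starRingEnd ℂ) (ψ x) * ψ' x with hI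
  have key : ∀ i : ZMod p, ch p ((k' - k) * i) * I = I := by
    intro i
    have h1 : ∑ x : GG p, (starRingEnd ℂ) (ψ (x * Uu i)) * ψ' (x * Uu i) = I := by
      rw [hI]
      exact Fintype.sum_equiv (Equiv.mulRight (Uu i)) _ _ fun x => rfl
    calc ch p ((k' - k) * i) * I
        = ∑ x : GG p, ch p ((k' - k) * i) * ((starRingEnd ℂ) (ψ x) * ψ' x) := by
          rw [hI, Finset.mul_sum]
      _ = ∑ x : GG p, (starRingEnd ℂ) (ψ (x * Uu i)) * ψ' (x * Uu i) := by
          refine Finset.sum_congr rfl fun x _ => ?_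
          rw [hψ, hψ', _root_.map_mul, conj_ch]
          have : ch p (-(k * i)) * ch p (k' * i) = ch p ((k' - k) * i) := by
            rw [← ch_add]; congr 1; ring
          rw [← this]
          ring
      _ = I := h1
  have hsum2 : (p : ℂ) * I = 0 := by
    have h3 : ∑ i : ZMod p, ch p ((k' - k) * i) * I = (p : ℂ) * I := by
      rw [Finset.sum_congr rfl fun i _ => key i]
      simp [Finset.card_univ, mul_comm]
    rw [← h3, ← Finset.sum_mul, ch_sum_mul (sub_ne_zero_of_ne (Ne.symm hne)), zero_mul]
  have hpne : (p : ℂ) ≠ 0 := by exact_mod_cast hpF.out.ne_zero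
  rcases mul_eq_zero.mp hsum2 with h | h
  · exact absurd h hpne
  · exact h

lemma exists_char_eigen (hφ : convR μ φ = fun x => (lam : ℂ) * φ x)
    (hφne : φ ≠ 0) (hsum : (∑ x : GG p, φ x) = 0) :
    ∃ k₀ : ZMod p, k₀ ≠ 0 ∧ ∀ t : (ZMod p)ˣ,
      ∃ ψ : GG p → ℂ, ψ ≠ 0 ∧ (convR μ ψ = fun x => (lam : ℂ) * ψ x) ∧
        (∀ x i, ψ (x * Uu i) = ch p ((k₀ * ((t⁻¹ : (ZMod p)ˣ) : ZMod p) ^ 2) * i) * ψ x) := by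
  by_cases hzero : ∀ k : ZMod p, k ≠ 0 → ∀ a : GG p, Fk φ k a = 0
  · exact absurd (exists_nonzero_Fk hφne hsum hzero) (by simp)
  push_neg at hzero
  obtain ⟨k₀, hk₀, a₀, hw⟩ := hzero
  refine ⟨k₀, hk₀, fun t => ?_⟩
  set w := Fk φ k₀ a₀ with hwdef
  refine ⟨fun x => w (x * Dd t), ?_, ?_, ?_⟩
  · intro h0
    apply hw
    funext y
    have := congrFun h0 (y * (Dd t)⁻¹)
    simpa [mul_assoc] using this
  · rw [conv_translate, Fk_eigen hφ]
  · intro x i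
    have h1 : x * Uu i * Dd t = x * Dd t * Uu (i * ((t⁻¹ : (ZMod p)ˣ) : ZMod p) ^ 2) := by
      rw [mul_assoc x, Uu_Dd, ← mul_assoc]
    show w (x * Uu i * Dd t) = _
    rw [h1, hwdef, Fk_char]
    congr 2
    ring

lemma card_S {k₀ : ZMod p} (hk₀ : k₀ ≠ 0) :
    (p : ℝ) - 1 ≤ 2 * (Finset.image
      (fun t : (ZMod p)ˣ => k₀ * ((t⁻¹ : (ZMod p)ˣ) : ZMod p) ^ 2) Finset.univ).card := by
  have hnat : p - 1 ≤ 2 * (Finset.image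
      (fun t : (ZMod p)ˣ => k₀ * ((t⁻¹ : (ZMod p)ˣ) : ZMod p) ^ 2) Finset.univ).card := by
    have hcard : (Finset.univ : Finset (ZMod p)ˣ).card = p - 1 := by
      rw [Finset.card_univ]
      exact ZMod.card_units p
    rw [← hcard]
    apply Finset.card_le_mul_card_image
    intro b hb
    obtain ⟨t₀, _, ht₀⟩ := Finset.mem_image.mp hb
    have hsub : ({t ∈ Finset.univ | k₀ * ((t⁻¹ : (ZMod p)ˣ) : ZMod p) ^ 2 = b} : Finset (ZMod p)ˣ)
        ⊆ {t₀, -t₀} := by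
      intro t ht
      simp only [Finset.mem_filter] at ht
      have heq : ((t⁻¹ : (ZMod p)ˣ) : ZMod p) ^ 2 = ((t₀⁻¹ : (ZMod p)ˣ) : ZMod p) ^ 2 :=
        mul_left_cancel₀ hk₀ (ht.2.trans ht₀.symm)
      have hfac : (((t⁻¹ : (ZMod p)ˣ) : ZMod p) - ((t₀⁻¹ : (ZMod p)ˣ) : ZMod p))
          * (((t⁻¹ : (ZMod p)ˣ) : ZMod p) + ((t₀⁻¹ : (ZMod p)ˣ) : ZMod p)) = 0 := by
        linear_combination heq
      have hval : ((t : ZMod p))⁻¹ = ((t₀ : ZMod p))⁻¹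
          ∨ ((t : ZMod p))⁻¹ = -((t₀ : ZMod p))⁻¹ := by
        rw [← Units.val_inv_eq_inv_val, ← Units.val_inv_eq_inv_val]
        rcases mul_eq_zero.mp hfac with h | h
        · exact Or.inl (sub_eq_zero.mp h)
        · exact Or.inr (eq_neg_of_add_eq_zero_left h)
      simp only [Finset.mem_insert, Finset.mem_singleton]
      rcases hval with h | h
      · left
        exact Units.ext (inv_injective h)
      · right
        apply Units.ext
        have : ((t : ZMod p))⁻¹ = ((-t₀ : (ZMod p)ˣ) : ZMod p)⁻¹ := by
          rw [Units.val_neg, inv_neg, h]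
        exact inv_injective this
    calc ({t ∈ Finset.univ | k₀ * ((t⁻¹ : (ZMod p)ˣ) : ZMod p) ^ 2 = b} : Finset (ZMod p)ˣ).card
        ≤ ({t₀, -t₀} : Finset (ZMod p)ˣ).card := Finset.card_le_card hsub
      _ ≤ 2 := Finset.card_le_two
  have h1 : (1 : ℝ) ≤ p := by exact_mod_cast hpF.out.one_lt.le
  calc (p : ℝ) - 1 ≤ ((p - 1 : ℕ) : ℝ) := by
        rw [Nat.cast_sub hpF.out.one_le]
        simp
    _ ≤ _ := by exact_mod_cast hnat

lemma conv_flip (ψ : GG p → ℂ) (x : GG p) :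
    ∑ y : GG p, (μ (x * y⁻¹) : ℂ) * ψ y = convR μ ψ x := by
  show _ = ∑ g : GG p, (μ g : ℂ) * ψ (g⁻¹ * x)
  refine Fintype.sum_equiv ((Equiv.inv (GG p)).trans (Equiv.mulLeft x)) _ _ fun y => ?_
  simp [_root_.mul_inv_rev, mul_assoc]

lemma key_bound (hφ : convR μ φ = fun x => (lam : ℂ) * φ x)
    (hφne : φ ≠ 0) (hsum : (∑ x : GG p, φ x) = 0) :
    lam ^ 2 * ((p : ℝ) - 1) ≤ 2 * (Fintype.card (GG p)) * ∑ g : GG p, μ g ^ 2 := by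
  classical
  obtain ⟨k₀, hk₀, hmain⟩ := exists_char_eigen hφ hφne hsum
  set S := Finset.image
    (fun t : (ZMod p)ˣ => k₀ * ((t⁻¹ : (ZMod p)ˣ) : ZMod p) ^ 2) Finset.univ with hSdef
  have hS : ∀ k ∈ S, ∃ ψ : GG p → ℂ, ψ ≠ 0 ∧ (convR μ ψ = fun x => (lam : ℂ) * ψ x) ∧
      ∀ x i, ψ (x * Uu i) = ch p (k * i) * ψ x := by
    intro k hk
    obtain ⟨t, _, ht⟩ := Finset.mem_image.mp hk
    obtain ⟨ψ, h1, h2, h3⟩ := hmain t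
    exact ⟨ψ, h1, h2, by rw [← ht]; exact h3⟩
  let Ψ : {k // k ∈ S} → GG p → ℂ := fun k => (hS k k.2).choose
  have hΨne : ∀ k, Ψ k ≠ 0 := fun k => (hS k k.2).choose_spec.1
  have hΨeig : ∀ k, convR μ (Ψ k) = fun x => (lam : ℂ) * Ψ k x :=
    fun k => (hS k k.2).choose_spec.2.1
  have hΨch : ∀ k, ∀ x i, Ψ k (x * Uu i) = ch p ((k : ZMod p) * i) * Ψ k x :=
    fun k => (hS k k.2).choose_spec.2.2
  let W : {k // k ∈ S} → EuclideanSpace ℂ (GG p) :=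
    fun k => (WithLp.equiv 2 (GG p → ℂ)).symm (Ψ k)
  have hWapp : ∀ k x, W k x = Ψ k x := fun k x => rfl
  have hWne : ∀ k, W k ≠ 0 := by
    intro k h
    exact hΨne k (funext fun x => by simpa [hWapp] using congrArg (fun w => w x) h)
  have hWnorm : ∀ k, ‖W k‖ ≠ 0 := fun k => norm_ne_zero_iff.mpr (hWne k)
  have hinner : ∀ k k', (inner ℂ (W k) (W k') : ℂ) = ∑ x : GG p, (starRingEnd ℂ) (Ψ k x) * Ψ k' x := by
    intro k k'
    rw [PiLp.inner_apply]
    exact Finset.sum_congr rfl fun x _ => RCLike.inner_apply' _ _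
  let c : {k // k ∈ S} → ℂ := fun k => (‖W k‖ : ℂ)⁻¹
  have hcconj : ∀ k, (starRingEnd ℂ) (c k) = c k := by
    intro k
    simp [c, ← Complex.ofReal_inv]
  let v : {k // k ∈ S} → EuclideanSpace ℂ (GG p) := fun k => c k • W k
  have hv : Orthonormal ℂ v := by
    rw [orthonormal_iff_ite]
    intro k k'
    show (inner ℂ (c k • W k) (c k' • W k') : ℂ) = _
    rw [inner_smul_left, inner_smul_right, hcconj]
    by_cases hkk : k = k'
    · subst hkk
      rw [if_pos rfl, inner_self_eq_norm_sq_to_K]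
      simp only [c]
      norm_cast
      have hW0 := hWnorm k
      have hW0' : ((‖W k‖ : ℝ) : ℂ) ≠ 0 := Complex.ofReal_ne_zero.mpr hW0
      field_simp
      have hr : ((1 / ‖W k‖) ^ 2 * ‖W k‖ ^ 2 : ℝ) = 1 := by field_simp
      show ((1 / ‖W k‖ : ℝ) : ℂ) ^ 2 * ((‖W k‖ ^ 2 : ℝ) : ℂ) = 1
      rw [← Complex.ofReal_pow, ← Complex.ofReal_mul, hr, Complex.ofReal_one]
    · rw [if_neg hkk, hinner, ortho_of_char (fun h => hkk (Subtype.ext h)) _ _ (hΨch k) (hΨch k')]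
      ring
  have hvapp : ∀ k x, v k x = c k * Ψ k x := fun k x => rfl
  -- Bessel inequality applied at each point
  have bessel : ∀ x : GG p, ∑ k : {k // k ∈ S}, lam ^ 2 * ‖v k x‖ ^ 2 ≤ ∑ g : GG p, μ g ^ 2 := by
    intro x
    let fx : EuclideanSpace ℂ (GG p) :=
      (WithLp.equiv 2 (GG p → ℂ)).symm (fun y => (μ (x * y⁻¹) : ℂ))
    have hB := hv.sum_inner_products_le (𝕜 := ℂ) fx (s := Finset.univ)
    have hin : ∀ k, (inner ℂ fx (v k) : ℂ) = (lam : ℂ) * (c k * Ψ k x) := by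
      intro k
      show (inner ℂ fx (c k • W k) : ℂ) = _
      rw [inner_smul_right]
      have hfw : (inner ℂ fx (W k) : ℂ) = (lam : ℂ) * Ψ k x := by
        rw [PiLp.inner_apply]
        have : ∀ y : GG p, (inner ℂ (fx y) (W k y) : ℂ) = (μ (x * y⁻¹) : ℂ) * Ψ k y := by
          intro y
          rw [RCLike.inner_apply']
          congr 1
          exact Complex.conj_ofReal _
        rw [Finset.sum_congr rfl fun y _ => this y, conv_flip, hΨeig k]
      rw [hfw]
      ring
    have hnormf : ‖fx‖ ^ 2 = ∑ g : GG p, μ g ^ 2 := by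
      rw [EuclideanSpace.norm_eq, Real.sq_sqrt (by positivity)]
      have h1 : ∀ y : GG p, ‖fx y‖ ^ 2 = μ (x * y⁻¹) ^ 2 := by
        intro y
        show ‖((μ (x * y⁻¹) : ℝ) : ℂ)‖ ^ 2 = _
        rw [Complex.norm_real, Real.norm_eq_abs, sq_abs]
      rw [Finset.sum_congr rfl fun y _ => h1 y]
      refine Fintype.sum_equiv ((Equiv.inv (GG p)).trans (Equiv.mulLeft x)) _ _ fun y => ?_
      simp
    have hterm : ∀ k, ‖(inner ℂ (v k) fx : ℂ)‖ ^ 2 = lam ^ 2 * ‖v k x‖ ^ 2 := by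
      intro k
      rw [← inner_conj_symm, RCLike.norm_conj, hin k]
      rw [norm_mul, mul_pow, Complex.norm_real, Real.norm_eq_abs, sq_abs, hvapp]
    calc ∑ k : {k // k ∈ S}, lam ^ 2 * ‖v k x‖ ^ 2
        = ∑ k : {k // k ∈ S}, ‖(inner ℂ (v k) fx : ℂ)‖ ^ 2 := by
          exact (Finset.sum_congr rfl fun k _ => hterm k).symm
      _ ≤ ‖fx‖ ^ 2 := hB
      _ = ∑ g : GG p, μ g ^ 2 := hnormf
  -- sum over x
  have hsum2 : lam ^ 2 * S.card ≤ (Fintype.card (GG p)) * ∑ g : GG p, μ g ^ 2 := by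
    have h2 := Finset.sum_le_sum (fun x (_ : x ∈ (Finset.univ : Finset (GG p))) => bessel x)
    rw [Finset.sum_const, Finset.card_univ, nsmul_eq_mul] at h2
    refine le_trans (le_of_eq ?_) h2
    rw [Finset.sum_comm]
    have hnv : ∀ k : {k // k ∈ S}, ∑ x : GG p, ‖v k x‖ ^ 2 = 1 := by
      intro k
      have h3 : ‖v k‖ = 1 := hv.1 k
      have h4 : ‖v k‖ ^ 2 = ∑ x : GG p, ‖v k x‖ ^ 2 := by
        rw [EuclideanSpace.norm_eq, Real.sq_sqrt (by positivity)]
      rw [h3] at h4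
      simpa using h4.symm
    calc lam ^ 2 * S.card = ∑ k : {k // k ∈ S}, lam ^ 2 := by
          rw [Finset.sum_const, Finset.card_univ, Fintype.card_coe, nsmul_eq_mul]
          ring
      _ = ∑ k : {k // k ∈ S}, ∑ x : GG p, lam ^ 2 * ‖v k x‖ ^ 2 := by
          refine Finset.sum_congr rfl fun k _ => ?_
          rw [← Finset.mul_sum, hnv k, mul_one]
  -- combine with card bound
  have hcard := card_S (p := p) hk₀
  have hl2 : (0 : ℝ) ≤ lam ^ 2 := sq_nonneg lam
  calc lam ^ 2 * ((p : ℝ) - 1) ≤ lam ^ 2 * (2 * S.card) := by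
        exact mul_le_mul_of_nonneg_left hcard hl2
    _ = 2 * (lam ^ 2 * S.card) := by ring
    _ ≤ 2 * ((Fintype.card (GG p)) * ∑ g : GG p, μ g ^ 2) := by
        refine mul_le_mul_of_nonneg_left hsum2 (by norm_num)
    _ = 2 * (Fintype.card (GG p)) * ∑ g : GG p, μ g ^ 2 := by ring

end Main


/-- Eigenvalue bound for symmetric convolution operators on `SL₂(𝔽_p)`: if `μ ≥ 0` is
symmetric and `λ` is an eigenvalue of `φ ↦ μ ∗ φ` on the mean-zero functions, then
`|λ| ≤ √(2/(p−1)) ‖μ‖₂ |G|^{1/2}`. -/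
theorem eigenvalue_bound_SL2_Fp
    (p : ℕ) [NeZero p] (hp : p.Prime) (hp5 : 5 ≤ p)
    (μ : Matrix.SpecialLinearGroup (Fin 2) (ZMod p) → ℝ)
    (hμnonneg : ∀ g, 0 ≤ μ g)
    (hμsymm : ∀ g, μ g⁻¹ = μ g)
    (lam : ℝ)
    (hEig : ∃ φ : Matrix.SpecialLinearGroup (Fin 2) (ZMod p) → ℂ, φ ≠ 0 ∧
      (∑ x : Matrix.SpecialLinearGroup (Fin 2) (ZMod p), φ x) = 0 ∧
      convR μ φ = fun x => (lam : ℂ) * φ x) :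
    |lam| ≤ Real.sqrt (2 / ((p : ℝ) - 1)) *
      Real.sqrt (∑ g : Matrix.SpecialLinearGroup (Fin 2) (ZMod p), μ g ^ 2) *
      Real.sqrt (Nat.card (Matrix.SpecialLinearGroup (Fin 2) (ZMod p))) := by
  haveI : Fact p.Prime := ⟨hp⟩
  obtain ⟨φ, hφne, hsum, hφ⟩ := hEig
  have hkey := key_bound (μ := μ) (lam := lam) (φ := φ) hφ hφne hsum
  set N : ℝ := (Fintype.card (GG p) : ℝ) with hN
  set A : ℝ := ∑ g : GG p, μ g ^ 2 with hA
  have hA0 : 0 ≤ A := Finset.sum_nonneg fun g _ => sq_nonneg _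
  have hp1 : (0 : ℝ) < (p : ℝ) - 1 := by
    have h5 : (5 : ℝ) ≤ p := by exact_mod_cast hp5
    linarith
  have hN0 : (0 : ℝ) ≤ N := Nat.cast_nonneg _
  have hlam2 : lam ^ 2 ≤ 2 / ((p : ℝ) - 1) * A * N := by
    rw [div_mul_eq_mul_div, div_mul_eq_mul_div, le_div_iff₀ hp1]
    calc lam ^ 2 * ((p : ℝ) - 1) ≤ 2 * N * A := hkey
      _ = 2 * A * N := by ring
  have hcard : Real.sqrt (Nat.card (Matrix.SpecialLinearGroup (Fin 2) (ZMod p))) = Real.sqrt N := by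
    rw [hN, Nat.card_eq_fintype_card]
  rw [hcard]
  calc |lam| = Real.sqrt (lam ^ 2) := (Real.sqrt_sq_eq_abs lam).symm
    _ ≤ Real.sqrt (2 / ((p : ℝ) - 1) * A * N) := Real.sqrt_le_sqrt hlam2
    _ = Real.sqrt (2 / ((p : ℝ) - 1)) * Real.sqrt A * Real.sqrt N := by
        rw [Real.sqrt_mul (by positivity) N, Real.sqrt_mul (by positivity) A]
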